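/- arXiv:1007.1082 — 3 statements merged into one kernel-verified Lean document; each statement's English description precedes it below -/
import Mathlib

section
/- Let μ be a doubling measure on ℂ and for each z ∈ ℂ let ρ(z) > 0 be a radius with μ(D(z,ρ(z))) = 1. Then for every r > 0 there exists c > 0 depending only on r and the doubling constant of μ such that c⁻¹ρ(ζ) ≤ ρ(z) ≤ c·ρ(ζ) whenever ζ ∈ D(z, r·ρ(z)). -/
open MeasureTheory Metric
open scoped ENNReal NNReal

/-- `μ` is doubling with constant `C`. -/
def DoublingWith (C : ℝ≥0) (μ : MeasureTheory.Measure ℂ) : Prop :=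
  ∀ z : ℂ, ∀ r : ℝ, 0 < r → μ (ball z (2 * r)) ≤ (C : ℝ≥0∞) * μ (ball z r)

lemma dub_iter {C : ℝ≥0} {μ : MeasureTheory.Measure ℂ} (hD : DoublingWith C μ)
    (x : ℂ) (s : ℝ) (hs : 0 < s) (n : ℕ) :
    μ (ball x (2 ^ n * s)) ≤ (C : ℝ≥0∞) ^ n * μ (ball x s) := by
  induction n with
  | zero => simp
  | succ n ih =>
      have h2 : (2:ℝ) ^ (n+1) * s = 2 * (2 ^ n * s) := by ring
      rw [h2]
      calc μ (ball x (2 * (2 ^ n * s))) ≤ (C : ℝ≥0∞) * μ (ball x (2 ^ n * s)) :=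
            hD x _ (by positivity)
        _ ≤ (C : ℝ≥0∞) * ((C : ℝ≥0∞) ^ n * μ (ball x s)) := by
            exact mul_le_mul_right ih _
        _ = (C : ℝ≥0∞) ^ (n+1) * μ (ball x s) := by ring

lemma rev_one {C : ℝ≥0} {μ : MeasureTheory.Measure ℂ} (hD : DoublingWith C μ)
    (x : ℂ) (s : ℝ) (hs : 0 < s) :
    ((C : ℝ≥0∞) ^ 3 + 1) * μ (ball x s) ≤ (C : ℝ≥0∞) ^ 3 * μ (ball x (2 * s)) := by
  set y : ℂ := x + ((3 * s / 2 : ℝ) : ℂ) with hy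
  have hdist : dist x y = 3 * s / 2 := by
    rw [Complex.dist_eq]
    have : x - y = -((3 * s / 2 : ℝ) : ℂ) := by rw [hy]; ring
    rw [this]
    rw [norm_neg, Complex.norm_real, Real.norm_eq_abs, abs_of_pos (by linarith)]
  -- ball x s ⊆ ball y (2^3 * (s/2))
  have h1 : ball x s ⊆ ball y (2 ^ 3 * (s / 2)) := by
    apply ball_subset_ball'
    rw [hdist]; norm_num; linarith
  have h2 : μ (ball x s) ≤ (C : ℝ≥0∞) ^ 3 * μ (ball y (s / 2)) :=
    (measure_mono h1).trans (dub_iter hD y (s/2) (by positivity) 3)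
  have hdisj : Disjoint (ball x s) (ball y (s / 2)) := by
    apply ball_disjoint_ball
    rw [hdist]; linarith
  have hsub2 : ball x s ∪ ball y (s / 2) ⊆ ball x (2 * s) := by
    apply Set.union_subset
    · exact ball_subset_ball (by linarith)
    · apply ball_subset_ball'
      rw [dist_comm, hdist]; linarith
  have hadd : μ (ball x s) + μ (ball y (s / 2)) ≤ μ (ball x (2 * s)) := by
    rw [← measure_union hdisj measurableSet_ball]
    exact measure_mono hsub2
  calc ((C : ℝ≥0∞) ^ 3 + 1) * μ (ball x s)
      = (C : ℝ≥0∞) ^ 3 * μ (ball x s) + μ (ball x s) := by ring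
    _ ≤ (C : ℝ≥0∞) ^ 3 * μ (ball x s) + (C : ℝ≥0∞) ^ 3 * μ (ball y (s / 2)) := by
        exact add_le_add_right h2 _
    _ = (C : ℝ≥0∞) ^ 3 * (μ (ball x s) + μ (ball y (s / 2))) := by ring
    _ ≤ (C : ℝ≥0∞) ^ 3 * μ (ball x (2 * s)) := mul_le_mul_right hadd _

lemma rev_iter {C : ℝ≥0} {μ : MeasureTheory.Measure ℂ} (hD : DoublingWith C μ)
    (x : ℂ) (s : ℝ) (hs : 0 < s) (m : ℕ) :
    ((C : ℝ≥0∞) ^ 3 + 1) ^ m * μ (ball x s) ≤ ((C : ℝ≥0∞) ^ 3) ^ m * μ (ball x (2 ^ m * s)) := by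
  induction m with
  | zero => simp
  | succ m ih =>
      have h2 : (2:ℝ) ^ (m+1) * s = 2 * (2 ^ m * s) := by ring
      calc ((C : ℝ≥0∞) ^ 3 + 1) ^ (m+1) * μ (ball x s)
          = ((C : ℝ≥0∞) ^ 3 + 1) * (((C : ℝ≥0∞) ^ 3 + 1) ^ m * μ (ball x s)) := by ring
        _ ≤ ((C : ℝ≥0∞) ^ 3 + 1) * (((C : ℝ≥0∞) ^ 3) ^ m * μ (ball x (2 ^ m * s))) :=
            mul_le_mul_right ih _
        _ = ((C : ℝ≥0∞) ^ 3) ^ m * (((C : ℝ≥0∞) ^ 3 + 1) * μ (ball x (2 ^ m * s))) := by ring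
        _ ≤ ((C : ℝ≥0∞) ^ 3) ^ m * ((C : ℝ≥0∞) ^ 3 * μ (ball x (2 * (2 ^ m * s)))) :=
            mul_le_mul_right (rev_one hD x _ (by positivity)) _
        _ = ((C : ℝ≥0∞) ^ 3) ^ (m+1) * μ (ball x (2 ^ (m+1) * s)) := by rw [h2]; ring

/-- For a doubling measure `μ` on `ℂ` with `ρ(z)` the radius for which `μ(D(z,ρ(z))) = 1`:
for every `r > 0` there is `c > 0`, depending only on `r` and the doubling constant, such that
`c⁻¹ ρ(ζ) ≤ ρ(z) ≤ c ρ(ζ)` whenever `ζ ∈ D(z, rρ(z))`. -/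
theorem stmt1 (C : ℝ≥0) (r : ℝ) (hr : 0 < r) :
    ∃ c : ℝ, 0 < c ∧
      ∀ (μ : MeasureTheory.Measure ℂ) (ρ : ℂ → ℝ), DoublingWith C μ →
        (∀ z, 0 < ρ z) → (∀ z, μ (ball z (ρ z)) = 1) →
        ∀ z ζ : ℂ, ζ ∈ ball z (r * ρ z) →
          c⁻¹ * ρ ζ ≤ ρ z ∧ ρ z ≤ c * ρ ζ := by
  obtain ⟨k, hk⟩ : ∃ k : ℕ, r + 1 < (2:ℝ) ^ k := pow_unbounded_of_one_lt (r+1) one_lt_two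
  set C' : ℝ≥0 := max C 1 with hC'def
  have hC'1 : (1:ℝ≥0) ≤ C' := le_max_right _ _
  obtain ⟨m, hm⟩ : ∃ m : ℕ, C' ^ k < (1 + (C' ^ 3)⁻¹) ^ m :=
    pow_unbounded_of_one_lt _ (lt_add_of_pos_right 1 (by positivity))
  have hkey : C' ^ k * (C' ^ 3) ^ m < (C' ^ 3 + 1) ^ m := by
    have h : (C' ^ 3 + 1) ^ m = (C' ^ 3) ^ m * (1 + (C' ^ 3)⁻¹) ^ m := by
      rw [← mul_pow]; congr 1; field_simp
    rw [h, mul_comm ((C' ^ 3) ^ m)]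
    exact mul_lt_mul_of_pos_right hm (by positivity)
  refine ⟨2 ^ m, by positivity, ?_⟩
  intro μ ρ hD hρpos hρ1 z ζ hζ
  have hρz := hρpos z
  have hρζ := hρpos ζ
  have hdist : dist ζ z < r * ρ z := mem_ball.mp hζ
  -- C ≥ 1
  have hC1 : (1:ℝ≥0) ≤ C := by
    by_contra h
    push_neg at h
    have h1 : μ (ball z (2 * ρ z)) ≤ (C : ℝ≥0∞) * μ (ball z (ρ z)) := hD z _ hρz
    have h2 : (1:ℝ≥0∞) ≤ μ (ball z (2 * ρ z)) := by
      rw [← hρ1 z]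
      exact measure_mono (ball_subset_ball (by linarith))
    rw [hρ1 z, mul_one] at h1
    have : (1:ℝ≥0∞) ≤ (C : ℝ≥0∞) := h2.trans h1
    rw [ENNReal.one_le_coe_iff] at this
    exact absurd this (not_le.mpr h)
  have hCC' : C' = C := max_eq_left hC1
  rw [hCC'] at hkey
  -- transfer hkey to ℝ≥0∞
  have hkey' : (C : ℝ≥0∞) ^ k * ((C : ℝ≥0∞) ^ 3) ^ m < ((C : ℝ≥0∞) ^ 3 + 1) ^ m := by
    have := ENNReal.coe_lt_coe.mpr hkey
    push_cast at this
    convert this using 2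
  -- fact1 : μ (ball ζ (ρ z)) ≤ C ^ k
  have hsub1 : ball ζ (ρ z) ⊆ ball z (2 ^ k * ρ z) := by
    apply ball_subset_ball'
    have h2 := mul_lt_mul_of_pos_right hk hρz
    nlinarith
  have fact1 : μ (ball ζ (ρ z)) ≤ (C : ℝ≥0∞) ^ k := by
    calc μ (ball ζ (ρ z)) ≤ μ (ball z (2 ^ k * ρ z)) := measure_mono hsub1
      _ ≤ (C : ℝ≥0∞) ^ k * μ (ball z (ρ z)) := dub_iter hD z _ hρz k
      _ = (C : ℝ≥0∞) ^ k := by rw [hρ1 z, mul_one]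
  -- fact2 : 1 ≤ C ^ k * μ (ball ζ (ρ z))
  have hsub2 : ball z (ρ z) ⊆ ball ζ (2 ^ k * ρ z) := by
    apply ball_subset_ball'
    rw [dist_comm]
    have h2 := mul_lt_mul_of_pos_right hk hρz
    nlinarith
  have fact2 : (1:ℝ≥0∞) ≤ (C : ℝ≥0∞) ^ k * μ (ball ζ (ρ z)) := by
    calc (1:ℝ≥0∞) = μ (ball z (ρ z)) := (hρ1 z).symm
      _ ≤ μ (ball ζ (2 ^ k * ρ z)) := measure_mono hsub2
      _ ≤ (C : ℝ≥0∞) ^ k * μ (ball ζ (ρ z)) := dub_iter hD ζ _ hρz k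
  -- upper bound : ρ ζ ≤ 2 ^ m * ρ z
  have hup : ρ ζ ≤ 2 ^ m * ρ z := by
    by_contra h
    push_neg at h
    have h1 : μ (ball ζ (2 ^ m * ρ z)) ≤ 1 := by
      rw [← hρ1 ζ]
      exact measure_mono (ball_subset_ball h.le)
    have h2 := rev_iter hD ζ (ρ z) hρz m
    have h3 : ((C : ℝ≥0∞) ^ 3 + 1) ^ m * μ (ball ζ (ρ z)) ≤ ((C : ℝ≥0∞) ^ 3) ^ m :=
      h2.trans (by simpa using mul_le_mul_right h1 (((C : ℝ≥0∞) ^ 3) ^ m))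
    have h4 : ((C : ℝ≥0∞) ^ 3 + 1) ^ m ≤ (C : ℝ≥0∞) ^ k * ((C : ℝ≥0∞) ^ 3) ^ m := by
      calc ((C : ℝ≥0∞) ^ 3 + 1) ^ m
          = ((C : ℝ≥0∞) ^ 3 + 1) ^ m * 1 := (mul_one _).symm
        _ ≤ ((C : ℝ≥0∞) ^ 3 + 1) ^ m * ((C : ℝ≥0∞) ^ k * μ (ball ζ (ρ z))) :=
            mul_le_mul_right fact2 _
        _ = (C : ℝ≥0∞) ^ k * (((C : ℝ≥0∞) ^ 3 + 1) ^ m * μ (ball ζ (ρ z))) := by ring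
        _ ≤ (C : ℝ≥0∞) ^ k * ((C : ℝ≥0∞) ^ 3) ^ m := mul_le_mul_right h3 _
    exact absurd h4 (not_le.mpr hkey')
  -- lower bound : ρ z ≤ 2 ^ m * ρ ζ
  have hlo : ρ z ≤ 2 ^ m * ρ ζ := by
    by_contra h
    push_neg at h
    have h1 : μ (ball ζ (2 ^ m * ρ ζ)) ≤ μ (ball ζ (ρ z)) :=
      measure_mono (ball_subset_ball h.le)
    have h2 := rev_iter hD ζ (ρ ζ) hρζ m
    rw [hρ1 ζ, mul_one] at h2
    have h4 : ((C : ℝ≥0∞) ^ 3 + 1) ^ m ≤ (C : ℝ≥0∞) ^ k * ((C : ℝ≥0∞) ^ 3) ^ m := by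
      calc ((C : ℝ≥0∞) ^ 3 + 1) ^ m
          ≤ ((C : ℝ≥0∞) ^ 3) ^ m * μ (ball ζ (2 ^ m * ρ ζ)) := h2
        _ ≤ ((C : ℝ≥0∞) ^ 3) ^ m * μ (ball ζ (ρ z)) := mul_le_mul_right h1 _
        _ ≤ ((C : ℝ≥0∞) ^ 3) ^ m * (C : ℝ≥0∞) ^ k := mul_le_mul_right fact1 _
        _ = (C : ℝ≥0∞) ^ k * ((C : ℝ≥0∞) ^ 3) ^ m := mul_comm _ _
    exact absurd h4 (not_le.mpr hkey')
  constructor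
  · rw [inv_mul_le_iff₀ (by positivity)]
    exact hup
  · exact hlo
end

section
/- Let H be a separable Hilbert space of functions on ℂ with reproducing kernel K, orthonormal basis (eₙ), and suppose K(z,z) = Σₙ |eₙ(z)|². Let G : ℂ → [0,∞) be measurable and suppose the Toeplitz operator T_G f = P(G f) (P the orthogonal projection from L²(e^{−2φ}dm) onto H) is compact, positive, and self-adjoint with eigenvalues λₙ ≥ 0 and eigenbasis (eₙ). Then for p ≥ 2, Σₙ λₙ^{p/2} ≤ ∫_ℂ G(z)^{p/2} K(z,z) e^{−2φ(z)} dm(z). -/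
open MeasureTheory
open scoped ENNReal NNReal

/-- Eigenvalue estimate for Toeplitz operators: if `(eₙ)` is an orthonormal basis of the
reproducing kernel Hilbert space `H ⊂ L²(e^{−2φ}dm)` (so each `|eₙ|²e^{−2φ}dm` is a
probability measure and `K(z,z) = Σₙ |eₙ(z)|²`), `G ≥ 0`, and the Toeplitz operator `T_G`
has eigenvalues `λₙ = ∫ |eₙ|² G e^{−2φ} dm` with eigenbasis `(eₙ)`, then for `p ≥ 2`
`Σₙ λₙ^{p/2} ≤ ∫ G^{p/2} K(z,z) e^{−2φ} dm`. -/
theorem stmt6 (φ : ℂ → ℝ) (G : ℂ → ℝ) (hG : ∀ z, 0 ≤ G z)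
    (e : ℕ → ℂ → ℂ) (lam : ℕ → ℝ) (p : ℝ) (hp : 2 ≤ p)
    (hprob : ∀ n, ∫ z : ℂ, ‖e n z‖ ^ 2 * Real.exp (-2 * φ z) = 1)
    (hlamInt : ∀ n, Integrable fun z : ℂ => ‖e n z‖ ^ 2 * G z * Real.exp (-2 * φ z))
    (hlam : ∀ n, lam n = ∫ z : ℂ, ‖e n z‖ ^ 2 * G z * Real.exp (-2 * φ z)) :
    ∑' n, ENNReal.ofReal (lam n ^ (p / 2)) ≤
      ∫⁻ z : ℂ, ENNReal.ofReal (G z ^ (p / 2) * Real.exp (-2 * φ z)) *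
        ∑' n, (‖e n z‖₊ : ℝ≥0∞) ^ 2 := by
  set q : ℝ := p / 2 with hqdef
  have hq1 : 1 ≤ q := by
    rw [hqdef]; linarith
  have hq0 : 0 < q := lt_of_lt_of_le one_pos hq1
  -- the weights
  set a : ℕ → ℂ → ℝ := fun n z => ‖e n z‖ ^ 2 * Real.exp (-2 * φ z) with ha
  set b : ℕ → ℂ → ℝ := fun n z => ‖e n z‖ ^ 2 * G z * Real.exp (-2 * φ z) with hb
  have ha_nonneg : ∀ n z, 0 ≤ a n z := fun n z =>
    mul_nonneg (by positivity) (Real.exp_nonneg _)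
  have hb_nonneg : ∀ n z, 0 ≤ b n z := fun n z =>
    mul_nonneg (mul_nonneg (by positivity) (hG z)) (Real.exp_nonneg _)
  have ha_int : ∀ n, Integrable (a n) := by
    intro n
    by_contra h
    have := hprob n
    rw [integral_undef h] at this
    norm_num at this
  set A : ℕ → ℂ → ℝ≥0∞ := fun n z => ENNReal.ofReal (a n z) with hA
  set B : ℕ → ℂ → ℝ≥0∞ := fun n z => ENNReal.ofReal (b n z) with hB
  have hA_meas : ∀ n, AEMeasurable (A n) := fun n =>
    (ha_int n).aemeasurable.ennreal_ofReal
  have hB_meas : ∀ n, AEMeasurable (B n) := fun n =>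
    (hlamInt n).aemeasurable.ennreal_ofReal
  have hBGA : ∀ n z, B n z = ENNReal.ofReal (G z) * A n z := by
    intro n z
    rw [hB, hA]
    simp only
    rw [show b n z = G z * a n z by rw [hb, ha]; ring, ENNReal.ofReal_mul (hG z)]
  -- the integrand for Jensen
  set F : ℕ → ℂ → ℝ≥0∞ := fun n z => ENNReal.ofReal (G z) ^ q * A n z with hF
  have hF_eq : ∀ n z, F n z = (B n z / A n z) ^ q * A n z := by
    intro n z
    by_cases h : A n z = 0
    · simp [hF, h]
    · have hAlt : A n z ≠ ⊤ := ENNReal.ofReal_ne_top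
      rw [hF, hBGA n z, mul_div_assoc, ENNReal.div_self h hAlt, mul_one]
  have hF_meas : ∀ n, AEMeasurable (F n) := by
    intro n
    have : AEMeasurable (fun z => (B n z / A n z) ^ q * A n z) :=
      (((hB_meas n).div (hA_meas n)).pow_const q).mul (hA_meas n)
    exact this.congr (Filter.Eventually.of_forall fun z => (hF_eq n z).symm)
  -- the probability property
  have hA_one : ∀ n, ∫⁻ z, A n z = 1 := by
    intro n
    have := ofReal_integral_eq_lintegral_ofReal (ha_int n)
      (Filter.Eventually.of_forall (ha_nonneg n))
    rw [hprob n] at this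
    simpa using this.symm
  -- lam as a lintegral
  have hlam_nonneg : ∀ n, 0 ≤ lam n := fun n =>
    (hlam n) ▸ integral_nonneg (hb_nonneg n)
  have hlamB : ∀ n, ENNReal.ofReal (lam n) = ∫⁻ z, B n z := by
    intro n
    rw [hlam n]
    exact ofReal_integral_eq_lintegral_ofReal (hlamInt n)
      (Filter.Eventually.of_forall (hb_nonneg n))
  -- Jensen: per-n inequality
  have key : ∀ n, ENNReal.ofReal (lam n ^ q) ≤ ∫⁻ z, F n z := by
    intro n
    rw [← ENNReal.ofReal_rpow_of_nonneg (hlam_nonneg n) hq0.le, hlamB n]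
    rcases eq_or_lt_of_le hq1 with h1 | h1
    · -- q = 1
      rw [← h1, ENNReal.rpow_one]
      refine lintegral_mono fun z => ?_
      rw [hBGA n z, hF]
      simp only
      rw [← h1, ENNReal.rpow_one]
    · -- q > 1 : Hölder
      have hconj : q.HolderConjugate (q / (q - 1)) := Real.HolderConjugate.conjExponent h1
      set f : ℂ → ℝ≥0∞ := fun z => ENNReal.ofReal (G z) * A n z ^ (1 / q) with hf
      set g : ℂ → ℝ≥0∞ := fun z => A n z ^ (1 / (q / (q - 1))) with hg
      have hf_meas : AEMeasurable f := by
        have : AEMeasurable (fun z => (F n z) ^ (1 / q)) := (hF_meas n).pow_const _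
        refine this.congr (Filter.Eventually.of_forall fun z => ?_)
        rw [hF, hf]
        simp only
        rw [ENNReal.mul_rpow_of_nonneg _ _ (by positivity), ← ENNReal.rpow_mul,
          mul_one_div, div_self hq0.ne', ENNReal.rpow_one]
      have hg_meas : AEMeasurable g := (hA_meas n).pow_const _
      have hfg : ∀ z, B n z = (f * g) z := by
        intro z
        rw [hBGA n z, hf, hg]
        simp only [Pi.mul_apply]
        rw [mul_assoc, ← ENNReal.rpow_add_of_nonneg _ _ (by positivity) (by
          have := hconj.symm.nonneg
          positivity), one_div, one_div, hconj.inv_add_inv_eq_one, ENNReal.rpow_one]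
      have hfq : ∀ z, f z ^ q = F n z := by
        intro z
        rw [hf, hF]
        simp only
        rw [ENNReal.mul_rpow_of_nonneg _ _ hq0.le, ← ENNReal.rpow_mul,
          one_div_mul_cancel hq0.ne', ENNReal.rpow_one]
      have hgq : ∀ z, g z ^ (q / (q - 1)) = A n z := by
        intro z
        rw [hg]
        simp only
        rw [← ENNReal.rpow_mul, one_div_mul_cancel hconj.symm.pos.ne', ENNReal.rpow_one]
      have hHolder := ENNReal.lintegral_mul_le_Lp_mul_Lq volume hconj hf_meas hg_meas
      simp only [← hfg, hfq, hgq] at hHolder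
      rw [hA_one n, ENNReal.one_rpow, mul_one] at hHolder
      calc (∫⁻ z, B n z) ^ q ≤ ((∫⁻ z, F n z) ^ (1 / q)) ^ q :=
            ENNReal.rpow_le_rpow hHolder hq0.le
        _ = ∫⁻ z, F n z := by
            rw [← ENNReal.rpow_mul, one_div_mul_cancel hq0.ne', ENNReal.rpow_one]
  -- sum up
  calc ∑' n, ENNReal.ofReal (lam n ^ q) ≤ ∑' n, ∫⁻ z, F n z := ENNReal.tsum_le_tsum key
    _ = ∫⁻ z, ∑' n, F n z := (lintegral_tsum hF_meas).symm
    _ = ∫⁻ z : ℂ, ENNReal.ofReal (G z ^ q * Real.exp (-2 * φ z)) *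
        ∑' n, (‖e n z‖₊ : ℝ≥0∞) ^ 2 := by
        refine lintegral_congr fun z => ?_
        have : ∀ n, F n z = (ENNReal.ofReal (G z ^ q * Real.exp (-2 * φ z))) *
            (‖e n z‖₊ : ℝ≥0∞) ^ 2 := by
          intro n
          rw [hF, hA]
          simp only
          rw [ha]
          simp only
          rw [ENNReal.ofReal_mul (Real.rpow_nonneg (hG z) _), ENNReal.ofReal_mul (by positivity),
            ← ENNReal.ofReal_rpow_of_nonneg (hG z) hq0.le, ENNReal.ofReal_pow (norm_nonneg _),
            ← enorm_eq_nnnorm, ← ofReal_norm]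
          ring
        rw [tsum_congr this, ENNReal.tsum_mul_left]
end

section
/- Let T be a compact operator from a reproducing kernel Hilbert space F ⊂ L²(ℂ, e^{−2φ}dm) (with kernel K, K(λ,λ) ∼ e^{2φ(λ)}/ρ(λ)²) to a Hilbert space H. For 2 ≤ p ≤ ∞ one has (∫_ℂ ‖T kλ‖^p dm(λ)/ρ(λ)²)^{1/p} ≲ ‖T‖_{S^p}, where kλ is the normalized reproducing kernel; the case p = ∞ reads sup_λ ‖T kλ‖ ≤ ‖T‖_{S^∞} = ‖T‖, and the general case follows by interpolation from p = 2 and p = ∞. -/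
open MeasureTheory
open scoped InnerProductSpace ENNReal NNReal

lemma auxJensen (a w : ℕ → ℝ) (ha : ∀ n, 0 ≤ a n) (hw : ∀ n, 0 ≤ w n)
    {q : ℝ} (hq : 1 ≤ q) (hwsum : Summable w) (hw1 : ∑' n, w n ≤ 1)
    (hsq : Summable (fun n => a n ^ q * w n)) :
    (∑' n, a n * w n) ^ q ≤ ∑' n, a n ^ q * w n := by
  rcases hq.eq_or_lt with h1 | h1
  · simp only [← h1, Real.rpow_one]
    exact le_refl _
  have hq0 : q ≠ 0 := by positivity
  set q' := Real.conjExponent q with hq'def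
  have hpq : q.HolderConjugate q' := Real.HolderConjugate.conjExponent h1
  have hq'0 : (0:ℝ) < q' := hpq.symm.pos
  set f : ℕ → ℝ := fun n => a n * w n ^ (1/q) with hfdef
  set g : ℕ → ℝ := fun n => w n ^ (1/q') with hgdef
  have hfq : ∀ n, f n ^ q = a n ^ q * w n := by
    intro n
    rw [hfdef]
    rw [Real.mul_rpow (ha n) (Real.rpow_nonneg (hw n) _), ← Real.rpow_mul (hw n),
      one_div_mul_cancel hq0, Real.rpow_one]
  have hgq : ∀ n, g n ^ q' = w n := by
    intro n
    rw [hgdef]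
    simp only
    rw [← Real.rpow_mul (hw n), one_div_mul_cancel hq'0.ne', Real.rpow_one]
  have hfg : ∀ n, f n * g n = a n * w n := by
    intro n
    rw [hfdef, hgdef]
    simp only
    rw [mul_assoc, ← Real.rpow_add_of_nonneg (hw n) (by positivity) (by positivity)]
    rw [one_div, one_div, hpq.inv_add_inv_eq_one, Real.rpow_one]
  have hf0 : ∀ n, 0 ≤ f n := fun n => mul_nonneg (ha n) (Real.rpow_nonneg (hw n) _)
  have hg0 : ∀ n, 0 ≤ g n := fun n => Real.rpow_nonneg (hw n) _
  have hfs : Summable (fun n => f n ^ q) := by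
    simpa only [hfq] using hsq
  have hgs : Summable (fun n => g n ^ q') := by
    simpa only [hgq] using hwsum
  have key := Real.inner_le_Lp_mul_Lq_tsum_of_nonneg hpq hf0 hg0 hfs hgs
  have key2 : ∑' n, a n * w n ≤ (∑' n, a n ^ q * w n) ^ (1/q) * (∑' n, w n) ^ (1/q') := by
    calc ∑' n, a n * w n = ∑' n, f n * g n := by rw [tsum_congr hfg]
    _ ≤ (∑' n, f n ^ q) ^ (1/q) * (∑' n, g n ^ q') ^ (1/q') := key
    _ = (∑' n, a n ^ q * w n) ^ (1/q) * (∑' n, w n) ^ (1/q') := by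
        rw [tsum_congr hfq, tsum_congr hgq]
  have hS0 : 0 ≤ ∑' n, a n ^ q * w n :=
    tsum_nonneg fun n => mul_nonneg (Real.rpow_nonneg (ha n) _) (hw n)
  have key3 : ∑' n, a n * w n ≤ (∑' n, a n ^ q * w n) ^ (1/q) := by
    refine key2.trans ?_
    have : (∑' n, w n) ^ (1/q') ≤ 1 :=
      Real.rpow_le_one (tsum_nonneg hw) hw1 (by positivity)
    calc (∑' n, a n ^ q * w n) ^ (1/q) * (∑' n, w n) ^ (1/q')
        ≤ (∑' n, a n ^ q * w n) ^ (1/q) * 1 := by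
          gcongr
    _ = _ := mul_one _
  calc (∑' n, a n * w n) ^ q ≤ ((∑' n, a n ^ q * w n) ^ (1/q)) ^ q := by
        gcongr
        exact tsum_nonneg fun n => mul_nonneg (ha n) (hw n)
  _ = ∑' n, a n ^ q * w n := by
        rw [← Real.rpow_mul hS0, one_div_mul_cancel hq0, Real.rpow_one]

lemma auxNormTsum {H : Type*} [NormedAddCommGroup H] [InnerProductSpace ℂ H]
    {f : ℕ → H} (hf : Orthonormal ℂ f) (c : ℕ → ℂ) (hc : Summable fun n => ‖c n‖ ^ 2) :
    ‖∑' n, c n • f n‖ ^ 2 ≤ ∑' n, ‖c n‖ ^ 2 := by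
  have hnn : ∀ n, (0:ℝ) ≤ ‖c n‖ ^ 2 := fun n => by positivity
  by_cases hs : Summable (fun n => c n • f n)
  · have ht : Filter.Tendsto (fun s : Finset ℕ => ∑ i ∈ s, c i • f i) Filter.atTop
        (nhds (∑' n, c n • f n)) := hs.hasSum
    have ht2 : Filter.Tendsto (fun s : Finset ℕ => ‖∑ i ∈ s, c i • f i‖ ^ 2) Filter.atTop
        (nhds (‖∑' n, c n • f n‖ ^ 2)) := by
      exact ((continuous_norm.pow 2).tendsto _).comp ht
    refine le_of_tendsto ht2 (Filter.Eventually.of_forall fun s => ?_)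
    have hps : ‖∑ i ∈ s, c i • f i‖ ^ 2 = ∑ i ∈ s, ‖c i‖ ^ 2 := by
      have h1 : (⟪∑ i ∈ s, c i • f i, ∑ i ∈ s, c i • f i⟫_ℂ) =
          ∑ i ∈ s, (starRingEnd ℂ) (c i) * c i := hf.inner_sum c c s
      have h0 : ‖∑ i ∈ s, c i • f i‖ ^ 2 =
          RCLike.re (⟪∑ i ∈ s, c i • f i, ∑ i ∈ s, c i • f i⟫_ℂ) :=
        (inner_self_eq_norm_sq _).symm
      rw [h0, h1, map_sum]
      refine Finset.sum_congr rfl fun i _ => ?_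
      rw [RCLike.conj_mul]
      norm_cast
    rw [hps]
    exact Summable.sum_le_tsum s (fun i _ => hnn i) hc
  · rw [tsum_eq_zero_of_not_summable hs]
    simpa using tsum_nonneg hnn

/-- Schatten kernel estimate: let `F` be a reproducing kernel Hilbert space of functions on
`ℂ`, isometrically contained in `L²(e^{−2φ}dm)` (realized by `ι`, reproducing vectors
`Kf λ = K(·,λ)`), with `K(λ,λ) = ‖Kf λ‖² ∼ e^{2φ(λ)}/ρ(λ)²` (constants `c₁,c₂`). If the
compact operator `T : F → H` has singular value decomposition with singular values `(sₙ)`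
`p`-summable, `2 ≤ p < ∞`, then `(∫ ‖T kλ‖^p dm(λ)/ρ(λ)²)^{1/p} ≲ ‖T‖_{S^p}`
(stated with `p`-th powers), with constant depending only on `c₁, c₂, p`; the `p = ∞` case
reads `sup_λ ‖T kλ‖ ≤ ‖T‖`. Here `kλ = Kf λ/‖Kf λ‖`. -/
theorem stmt19 {F H : Type*}
    [NormedAddCommGroup F] [InnerProductSpace ℂ F] [CompleteSpace F]
    [NormedAddCommGroup H] [InnerProductSpace ℂ H] [CompleteSpace H]
    (c₁ c₂ : ℝ) (hc₁ : 0 < c₁) (hc₂ : 0 < c₂) (p : ℝ) (hp : 2 ≤ p) :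
    ∃ c : ℝ, 0 < c ∧
      ∀ (φ ρ : ℂ → ℝ) (Kf : ℂ → F) (ι : F →ₗ[ℂ] (ℂ → ℂ)),
        (∀ z, 0 < ρ z) →
        (∀ (f : F) (z : ℂ), ι f z = ⟪Kf z, f⟫_ℂ) →
        (∀ f : F, (‖f‖ : ℝ) ^ 2 = ∫ z : ℂ, ‖ι f z‖ ^ 2 * Real.exp (-2 * φ z)) →
        (∀ l : ℂ, c₁ * (Real.exp (2 * φ l) / ρ l ^ 2) ≤ ‖Kf l‖ ^ 2 ∧
          ‖Kf l‖ ^ 2 ≤ c₂ * (Real.exp (2 * φ l) / ρ l ^ 2)) →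
        ∀ (T : F →L[ℂ] H) (s : ℕ → ℝ) (e : ℕ → F) (f : ℕ → H),
          Orthonormal ℂ e → Orthonormal ℂ f → (∀ n, 0 ≤ s n) →
          (∀ x : F, T x = ∑' n, ((s n : ℂ) * ⟪e n, x⟫_ℂ) • f n) →
          Summable (fun n => s n ^ p) →
          (∫⁻ l : ℂ, ENNReal.ofReal (‖T ((‖Kf l‖⁻¹ : ℝ) • Kf l)‖ ^ p / ρ l ^ 2) ≤
              ENNReal.ofReal (c * ∑' n, s n ^ p)) ∧
          (∀ l : ℂ, ‖T ((‖Kf l‖⁻¹ : ℝ) • Kf l)‖ ≤ ‖T‖) := by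
  refine ⟨1 / c₁, by positivity, ?_⟩
  intro φ ρ Kf ι hρ hι hiso hK T s e f he hf hs hT hsp
  have hp0 : (0:ℝ) < p := lt_of_lt_of_le (by norm_num) hp
  have hKpos : ∀ l : ℂ, 0 < ‖Kf l‖ := by
    intro l
    have h1 := (hK l).1
    have hpos : 0 < c₁ * (Real.exp (2 * φ l) / ρ l ^ 2) := by
      have := hρ l
      have := Real.exp_pos (2 * φ l)
      positivity
    nlinarith [norm_nonneg (Kf l)]
  have hnk : ∀ l : ℂ, ‖(‖Kf l‖⁻¹ : ℝ) • Kf l‖ = 1 := by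
    intro l
    rw [norm_smul, Real.norm_eq_abs, abs_of_pos (inv_pos.2 (hKpos l)),
      inv_mul_cancel₀ (hKpos l).ne']
  refine ⟨?_, fun l => ?_⟩
  swap
  · calc ‖T ((‖Kf l‖⁻¹ : ℝ) • Kf l)‖ ≤ ‖T‖ * ‖(‖Kf l‖⁻¹ : ℝ) • Kf l‖ := T.le_opNorm _
    _ = ‖T‖ := by rw [hnk l, mul_one]
  -- main estimate
  have hS0 : 0 ≤ ∑' n, s n ^ p := tsum_nonneg fun n => Real.rpow_nonneg (hs n) p
  -- integrability of the weighted squares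
  have hint : ∀ n, Integrable (fun z => ‖ι (e n) z‖ ^ 2 * Real.exp (-2 * φ z)) := by
    intro n
    by_contra hni
    have h1 := hiso (e n)
    rw [integral_undef hni, he.1 n] at h1
    norm_num at h1
  have hlint : ∀ n, (∫⁻ z : ℂ, ENNReal.ofReal (‖ι (e n) z‖ ^ 2 * Real.exp (-2 * φ z))) = 1 := by
    intro n
    rw [← MeasureTheory.ofReal_integral_eq_lintegral_ofReal (hint n)
      (Filter.Eventually.of_forall fun z => by positivity), ← hiso (e n), he.1 n]
    norm_num
  -- the pointwise majorant
  set h : ℕ → ℂ → ℝ :=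
    fun n l => (1 / c₁ * s n ^ p) * (‖ι (e n) l‖ ^ 2 * Real.exp (-2 * φ l)) with hh
  have hhnn : ∀ n l, 0 ≤ h n l := by
    intro n l
    rw [hh]
    have := Real.rpow_nonneg (hs n) p
    positivity
  have hιbd : ∀ n l, ‖ι (e n) l‖ ≤ ‖Kf l‖ := by
    intro n l
    rw [hι (e n) l]
    calc ‖⟪Kf l, e n⟫_ℂ‖ ≤ ‖Kf l‖ * ‖e n‖ := norm_inner_le_norm _ _
    _ = ‖Kf l‖ := by rw [he.1 n, mul_one]
  have hsum_h : ∀ l, Summable (fun n => h n l) := by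
    intro l
    refine Summable.of_nonneg_of_le (fun n => hhnn n l) (fun n => ?_)
      (hsp.mul_left (1 / c₁ * (‖Kf l‖ ^ 2 * Real.exp (-2 * φ l))))
    rw [hh]
    simp only
    have h2 : ‖ι (e n) l‖ ^ 2 ≤ ‖Kf l‖ ^ 2 :=
      pow_le_pow_left₀ (norm_nonneg _) (hιbd n l) 2
    have h3 : (0:ℝ) ≤ s n ^ p := Real.rpow_nonneg (hs n) p
    have h4 : (0:ℝ) < Real.exp (-2 * φ l) := Real.exp_pos _
    calc 1 / c₁ * s n ^ p * (‖ι (e n) l‖ ^ 2 * Real.exp (-2 * φ l))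
        ≤ 1 / c₁ * s n ^ p * (‖Kf l‖ ^ 2 * Real.exp (-2 * φ l)) := by gcongr
    _ = 1 / c₁ * (‖Kf l‖ ^ 2 * Real.exp (-2 * φ l)) * s n ^ p := by ring
  -- the p-th power identity
  have hpow2 : ∀ x : ℝ, 0 ≤ x → (x ^ (2:ℕ)) ^ (p/2) = x ^ p := by
    intro x hx
    rw [← Real.rpow_natCast x 2, ← Real.rpow_mul hx,
      show ((2:ℕ):ℝ) * (p/2) = p by push_cast; ring]
  -- pointwise estimate
  have hpoint : ∀ l : ℂ, ‖T ((‖Kf l‖⁻¹ : ℝ) • Kf l)‖ ^ p / ρ l ^ 2 ≤ ∑' n, h n l := by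
    intro l
    set k := (‖Kf l‖⁻¹ : ℝ) • Kf l with hk
    have hk1 : ‖k‖ = 1 := by rw [hk]; exact hnk l
    set w : ℕ → ℝ := fun n => ‖⟪e n, k⟫_ℂ‖ ^ 2 with hwdef
    have hw0 : ∀ n, 0 ≤ w n := fun n => by positivity
    have hwsum : Summable w := he.inner_products_summable k
    have hw1 : ∑' n, w n ≤ 1 := by
      have := he.tsum_inner_products_le k
      rwa [hk1, one_pow] at this
    have hwle1 : ∀ n, w n ≤ 1 :=
      fun n => le_trans (Summable.le_tsum hwsum n fun m _ => hw0 m) hw1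
    -- bound on s
    have hsbd : ∀ n, s n ^ (2:ℕ) ≤ ((∑' m, s m ^ p) ^ (1/p)) ^ (2:ℕ) := by
      intro n
      have h1 : s n ^ p ≤ ∑' m, s m ^ p :=
        Summable.le_tsum hsp n fun m _ => Real.rpow_nonneg (hs m) p
      have h2 : s n ≤ (∑' m, s m ^ p) ^ (1/p) := by
        have h3 := Real.rpow_le_rpow (Real.rpow_nonneg (hs n) p) h1
          (by positivity : (0:ℝ) ≤ 1/p)
        rwa [← Real.rpow_mul (hs n), mul_one_div_cancel hp0.ne', Real.rpow_one] at h3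
      gcongr
      exact hs n
    have hsw : Summable (fun n => s n ^ (2:ℕ) * w n) := by
      refine Summable.of_nonneg_of_le (fun n => mul_nonneg (by positivity) (hw0 n))
        (fun n => ?_) (hwsum.mul_left (((∑' m, s m ^ p) ^ (1/p)) ^ (2:ℕ)))
      exact mul_le_mul_of_nonneg_right (hsbd n) (hw0 n)
    have hspw : Summable (fun n => s n ^ p * w n) := by
      refine Summable.of_nonneg_of_le
        (fun n => mul_nonneg (Real.rpow_nonneg (hs n) p) (hw0 n)) (fun n => ?_) hsp
      calc s n ^ p * w n ≤ s n ^ p * 1 := by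
            have := Real.rpow_nonneg (hs n) p
            gcongr
            exact hwle1 n
      _ = s n ^ p := mul_one _
    -- norm of T k
    have hTk : ‖T k‖ ^ (2:ℕ) ≤ ∑' n, s n ^ (2:ℕ) * w n := by
      rw [hT k]
      have hcn : ∀ n, ‖(s n : ℂ) * ⟪e n, k⟫_ℂ‖ ^ (2:ℕ) = s n ^ (2:ℕ) * w n := by
        intro n
        rw [norm_mul, mul_pow, Complex.norm_real, Real.norm_eq_abs, abs_of_nonneg (hs n)]
      have hsum2 : Summable (fun n => ‖(s n : ℂ) * ⟪e n, k⟫_ℂ‖ ^ 2) := by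
        refine hsw.congr fun n => ?_
        rw [hcn n]
      calc ‖∑' n, ((s n : ℂ) * ⟪e n, k⟫_ℂ) • f n‖ ^ 2
          ≤ ∑' n, ‖(s n : ℂ) * ⟪e n, k⟫_ℂ‖ ^ 2 := auxNormTsum hf _ hsum2
      _ = ∑' n, s n ^ (2:ℕ) * w n := tsum_congr hcn
    -- main chain
    have h1 : ‖T k‖ ^ p ≤ ∑' n, s n ^ p * w n := by
      have h2 : ‖T k‖ ^ p = (‖T k‖ ^ (2:ℕ)) ^ (p/2) := (hpow2 _ (norm_nonneg _)).symm
      rw [h2]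
      have h3 : (‖T k‖ ^ (2:ℕ)) ^ (p/2) ≤ (∑' n, s n ^ (2:ℕ) * w n) ^ (p/2) :=
        Real.rpow_le_rpow (by positivity) hTk (by positivity)
      have h4 := auxJensen (fun n => s n ^ (2:ℕ)) w (fun n => by positivity) hw0
        (by linarith : (1:ℝ) ≤ p/2) hwsum hw1
        (by
          refine hspw.congr fun n => ?_
          rw [hpow2 (s n) (hs n)])
      refine h3.trans (h4.trans_eq ?_)
      exact tsum_congr fun n => by rw [hpow2 (s n) (hs n)]
    -- convert w to the integrand
    have hwg : ∀ n, w n = (‖Kf l‖ ^ (2:ℕ))⁻¹ * ‖ι (e n) l‖ ^ (2:ℕ) := by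
      intro n
      have hk2 : k = ((‖Kf l‖⁻¹ : ℝ) : ℂ) • Kf l := by
        rw [hk]
        exact RCLike.real_smul_eq_coe_smul (K := ℂ) _ _
      rw [hwdef]
      simp only
      rw [hk2, inner_smul_right, norm_mul, mul_pow, Complex.norm_real, Real.norm_eq_abs,
        abs_of_nonneg (inv_nonneg.2 (norm_nonneg _)), inv_pow]
      congr 2
      rw [hι (e n) l]
      exact norm_inner_symm _ _
    have hterm : ∀ n, s n ^ p * w n / ρ l ^ 2 ≤ h n l := by
      intro n
      rw [hwg n, hh]
      simp only
      have hA : (0:ℝ) < ‖Kf l‖ ^ (2:ℕ) := by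
        have := hKpos l
        positivity
      have hR : (0:ℝ) < ρ l ^ 2 := by
        have := hρ l
        positivity
      have hE : (0:ℝ) < Real.exp (2 * φ l) := Real.exp_pos _
      have hX : (0:ℝ) ≤ ‖ι (e n) l‖ ^ (2:ℕ) := by positivity
      have hsnp : (0:ℝ) ≤ s n ^ p := Real.rpow_nonneg (hs n) p
      have hkey : c₁ * Real.exp (2 * φ l) ≤ ‖Kf l‖ ^ 2 * ρ l ^ 2 := by
        have h5 := (hK l).1
        have h6 : c₁ * (Real.exp (2 * φ l) / ρ l ^ 2) * ρ l ^ 2 ≤ ‖Kf l‖ ^ 2 * ρ l ^ 2 :=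
          mul_le_mul_of_nonneg_right h5 hR.le
        calc c₁ * Real.exp (2 * φ l) = c₁ * (Real.exp (2 * φ l) / ρ l ^ 2) * ρ l ^ 2 := by
              rw [mul_assoc, div_mul_cancel₀ _ hR.ne']
        _ ≤ _ := h6
      have hexp : Real.exp (-2 * φ l) = (Real.exp (2 * φ l))⁻¹ := by
        rw [← Real.exp_neg]
        congr 1
        ring
      have h2 : (‖Kf l‖ ^ (2:ℕ) * ρ l ^ 2)⁻¹ ≤ (c₁ * Real.exp (2 * φ l))⁻¹ := by
        apply inv_anti₀ (by positivity) hkey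
      calc s n ^ p * ((‖Kf l‖ ^ (2:ℕ))⁻¹ * ‖ι (e n) l‖ ^ (2:ℕ)) / ρ l ^ 2
          = (s n ^ p * ‖ι (e n) l‖ ^ (2:ℕ)) * (‖Kf l‖ ^ (2:ℕ) * ρ l ^ 2)⁻¹ := by
            rw [div_eq_mul_inv, mul_inv]
            ring
      _ ≤ (s n ^ p * ‖ι (e n) l‖ ^ (2:ℕ)) * (c₁ * Real.exp (2 * φ l))⁻¹ := by
            apply mul_le_mul_of_nonneg_left h2 (by positivity)
      _ = 1 / c₁ * s n ^ p * (‖ι (e n) l‖ ^ 2 * Real.exp (-2 * φ l)) := by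
            rw [hexp, mul_inv]
            ring
    have hlhs : Summable (fun n => s n ^ p * w n / ρ l ^ 2) := by
      simp only [div_eq_mul_inv]
      exact hspw.mul_right _
    calc ‖T k‖ ^ p / ρ l ^ 2 ≤ (∑' n, s n ^ p * w n) / ρ l ^ 2 := by
          have := hρ l
          gcongr
    _ = ∑' n, s n ^ p * w n / ρ l ^ 2 := by
          rw [tsum_div_const]
    _ ≤ ∑' n, h n l := Summable.tsum_le_tsum hterm hlhs (hsum_h l)
  -- conclude via the lintegral
  have hmeas : ∀ n, AEMeasurable (fun l : ℂ => ENNReal.ofReal (h n l)) := by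
    intro n
    refine ENNReal.measurable_ofReal.comp_aemeasurable ?_
    exact ((hint n).aestronglyMeasurable.aemeasurable).const_mul _
  calc ∫⁻ l : ℂ, ENNReal.ofReal (‖T ((‖Kf l‖⁻¹ : ℝ) • Kf l)‖ ^ p / ρ l ^ 2)
      ≤ ∫⁻ l : ℂ, ∑' n, ENNReal.ofReal (h n l) := by
        refine lintegral_mono fun l => ?_
        rw [← ENNReal.ofReal_tsum_of_nonneg (fun n => hhnn n l) (hsum_h l)]
        exact ENNReal.ofReal_le_ofReal (hpoint l)
  _ = ∑' n, ∫⁻ l : ℂ, ENNReal.ofReal (h n l) := lintegral_tsum hmeas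
  _ = ∑' n, ENNReal.ofReal (1 / c₁ * s n ^ p) := by
        refine tsum_congr fun n => ?_
        have hc' : (0:ℝ) ≤ 1 / c₁ * s n ^ p := by
          have := Real.rpow_nonneg (hs n) p
          positivity
        calc ∫⁻ l : ℂ, ENNReal.ofReal (h n l)
            = ∫⁻ l : ℂ, ENNReal.ofReal (1 / c₁ * s n ^ p) *
                ENNReal.ofReal (‖ι (e n) l‖ ^ 2 * Real.exp (-2 * φ l)) := by
              refine lintegral_congr fun l => ?_
              rw [hh]
              exact ENNReal.ofReal_mul hc'
        _ = ENNReal.ofReal (1 / c₁ * s n ^ p) *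
              ∫⁻ l : ℂ, ENNReal.ofReal (‖ι (e n) l‖ ^ 2 * Real.exp (-2 * φ l)) :=
              lintegral_const_mul' _ _ ENNReal.ofReal_ne_top
        _ = ENNReal.ofReal (1 / c₁ * s n ^ p) := by rw [hlint n, mul_one]
  _ = ENNReal.ofReal (1 / c₁ * ∑' n, s n ^ p) := by
        rw [← ENNReal.ofReal_tsum_of_nonneg (fun n => by
          have := Real.rpow_nonneg (hs n) p
          positivity) (hsp.mul_left _), tsum_mul_left]
end
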